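/- Global modes are Nash equilibria: any state S* that maximizes the stationary probability π(S) ∝ exp(Φ(S)/β) over 𝒮_n (equivalently, maximizes the potential Φ over 𝒮_n) is n-player Nash stable, i.e. a Nash equilibrium of the one-shot n-player game in which each player i simultaneously chooses (a_i, {g_{ij}}_{j≠i}). -/

import Mathlib

open Finset

noncomputable section

/-- A network state: the diagonal entry `S i i` is player `i`'s action status `a_i`,
and the off-diagonal entry `S i j` (for `i ≠ j`) is the link status `g_{ij}`. -/
abbrev NetState (n : ℕ) := Fin n → Fin n → Bool

/-- Numerical (0/1) value of a Boolean coordinate. -/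
def bv (x : Bool) : ℝ := if x then 1 else 0

/-- Player `i`'s payoff
`u_i(S) = a_i v_i + h a_i Σ_{j≠i} a_j + φ a_i Σ_{j≠i} g_{ij} g_{ji} a_j
  + Σ_{j≠i} g_{ij} w_{ij} + m Σ_{j≠i} g_{ij} g_{ji}
  + q Σ_{j,l pairwise distinct from each other and from i} g_{ij} g_{jl} g_{li}`. -/
def payoff (n : ℕ) (v : Fin n → ℝ) (w : Fin n → Fin n → ℝ) (h φ m q : ℝ)
    (S : NetState n) (i : Fin n) : ℝ :=
  bv (S i i) * v i
    + h * bv (S i i) * ∑ j ∈ univ.filter (fun j => j ≠ i), bv (S j j)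
    + φ * bv (S i i) * ∑ j ∈ univ.filter (fun j => j ≠ i), bv (S i j) * bv (S j i) * bv (S j j)
    + ∑ j ∈ univ.filter (fun j => j ≠ i), bv (S i j) * w i j
    + m * ∑ j ∈ univ.filter (fun j => j ≠ i), bv (S i j) * bv (S j i)
    + q * ∑ j ∈ univ.filter (fun j => j ≠ i),
        ∑ l ∈ univ.filter (fun l => l ≠ i ∧ l ≠ j),
          bv (S i j) * bv (S j l) * bv (S l i)

/-- The potential
`Φ(S) = Σ_i a_i v_i + (h/2) Σ_{i≠j} a_i a_j + (φ/2) Σ_{i≠j} a_i a_j g_{ij} g_{ji}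
  + Σ_{i≠j} g_{ij} w_{ij} + (m/2) Σ_{i≠j} g_{ij} g_{ji}
  + (q/3) Σ_{i,j,l pairwise distinct} g_{ij} g_{jl} g_{li}`. -/
def potential (n : ℕ) (v : Fin n → ℝ) (w : Fin n → Fin n → ℝ) (h φ m q : ℝ)
    (S : NetState n) : ℝ :=
  (∑ i, bv (S i i) * v i)
    + (h / 2) * ∑ i, ∑ j ∈ univ.filter (fun j => j ≠ i), bv (S i i) * bv (S j j)
    + (φ / 2) * ∑ i, ∑ j ∈ univ.filter (fun j => j ≠ i),
        bv (S i i) * bv (S j j) * bv (S i j) * bv (S j i)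
    + (∑ i, ∑ j ∈ univ.filter (fun j => j ≠ i), bv (S i j) * w i j)
    + (m / 2) * ∑ i, ∑ j ∈ univ.filter (fun j => j ≠ i), bv (S i j) * bv (S j i)
    + (q / 3) * ∑ i, ∑ j ∈ univ.filter (fun j => j ≠ i),
        ∑ l ∈ univ.filter (fun l => l ≠ i ∧ l ≠ j), bv (S i j) * bv (S j l) * bv (S l i)

/-- `S'` differs from `S` only in the coordinates `(a_i, {g_{ij} : j ∈ B, j ≠ i})`
controlled by player `i` within the set `B` (recall `a_i` is the coordinate `(i,i)`). -/
def deviatesOnly (n : ℕ) (i : Fin n) (B : Finset (Fin n)) (S S' : NetState n) : Prop :=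
  ∀ x y : Fin n, ¬(x = i ∧ y ∈ B) → S' x y = S x y

/-- `S` is `k`-player Nash stable: for every subset `Ik` of `k` players and every `i ∈ Ik`,
no deviation of `i` in the coordinates `(a_i, {g_{ij} : j ∈ Ik, j ≠ i})` improves `i`'s payoff. -/
def kPS (n : ℕ) (v : Fin n → ℝ) (w : Fin n → Fin n → ℝ) (h φ m q : ℝ) (k : ℕ)
    (S : NetState n) : Prop :=
  ∀ Ik : Finset (Fin n), Ik.card = k → ∀ i ∈ Ik,
    ∀ S' : NetState n, deviatesOnly n i Ik S S' →
      payoff n v w h φ m q S' i ≤ payoff n v w h φ m q S i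

/-- The stationary distribution `π(S) = exp(Φ(S)/β) / Σ_T exp(Φ(T)/β)`. -/
noncomputable def statDist (n : ℕ) (v : Fin n → ℝ) (w : Fin n → Fin n → ℝ) (h φ m q β : ℝ)
    (S : NetState n) : ℝ :=
  Real.exp (potential n v w h φ m q S / β)
    / ∑ T : NetState n, Real.exp (potential n v w h φ m q T / β)

section Aux

variable {n : ℕ}

lemma ite_sum_zero {c : Prop} [Decidable c] {α : Type*} (s : Finset α) (g : α → ℝ) :
    (if c then ∑ x ∈ s, g x else 0) = ∑ x ∈ s, if c then g x else 0 := by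
  split <;> simp

lemma sum2_sub {α β : Type*} (s : Finset α) (t : α → Finset β) (f g : α → β → ℝ) :
    ∑ x ∈ s, ∑ y ∈ t x, (f x y - g x y)
      = (∑ x ∈ s, ∑ y ∈ t x, f x y) - ∑ x ∈ s, ∑ y ∈ t x, g x y := by
  simp [Finset.sum_sub_distrib]

lemma sum3_sub {α β γ : Type*} (s : Finset α) (t : α → Finset β) (r : α → β → Finset γ)
    (f g : α → β → γ → ℝ) :
    ∑ x ∈ s, ∑ y ∈ t x, ∑ z ∈ r x y, (f x y z - g x y z)
      = (∑ x ∈ s, ∑ y ∈ t x, ∑ z ∈ r x y, f x y z)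
        - ∑ x ∈ s, ∑ y ∈ t x, ∑ z ∈ r x y, g x y z := by
  simp [Finset.sum_sub_distrib]

lemma double_filter_to_ite (p : Fin n → Prop) [DecidablePred p]
    (q : Fin n → Fin n → Prop) [∀ x, DecidablePred (q x)] (f : Fin n → Fin n → ℝ) :
    ∑ x ∈ univ.filter p, ∑ l ∈ univ.filter (q x), f x l
      = ∑ x, ∑ l, if p x ∧ q x l then f x l else 0 := by
  rw [Finset.sum_filter]
  refine Finset.sum_congr rfl fun x _ => ?_
  rw [Finset.sum_filter, _root_.ite_sum_zero]
  refine Finset.sum_congr rfl fun l _ => ?_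
  by_cases hp : p x <;> by_cases hq : q x l <;> simp [hp, hq]

lemma sum_swap_pairs (i : Fin n) (f : Fin n → Fin n → ℝ) :
    ∑ x ∈ univ.filter (fun x => x ≠ i), ∑ l ∈ univ.filter (fun l => l ≠ x ∧ l ≠ i), f l x
      = ∑ y ∈ univ.filter (fun y => y ≠ i), ∑ l ∈ univ.filter (fun l => l ≠ i ∧ l ≠ y), f y l := by
  rw [double_filter_to_ite (fun x => x ≠ i) (fun x l => l ≠ x ∧ l ≠ i) (fun x l => f l x),
    double_filter_to_ite (fun y => y ≠ i) (fun y l => l ≠ i ∧ l ≠ y) (fun y l => f y l),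
    Finset.sum_comm]
  refine Finset.sum_congr rfl fun l _ => Finset.sum_congr rfl fun x _ => ?_
  refine if_congr ?_ rfl rfl
  constructor
  · rintro ⟨h1, h2, h3⟩; exact ⟨h3, h1, Ne.symm h2⟩
  · rintro ⟨h1, h2, h3⟩; exact ⟨h2, Ne.symm h3, h1⟩

lemma sum_pair (i : Fin n) (D : Fin n → Fin n → ℝ)
    (h0 : ∀ x y, x ≠ i → y ≠ i → D x y = 0) :
    ∑ x, ∑ y ∈ univ.filter (fun y => y ≠ x), D x y
      = (∑ y ∈ univ.filter (fun y => y ≠ i), D i y)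
        + ∑ x ∈ univ.filter (fun x => x ≠ i), D x i := by
  rw [← Finset.sum_erase_add univ _ (Finset.mem_univ i), ← Finset.filter_ne', add_comm]
  congr 1
  refine Finset.sum_congr rfl fun x hx => ?_
  have hxi : x ≠ i := (Finset.mem_filter.mp hx).2
  refine Finset.sum_eq_single_of_mem i ?_ ?_
  · simp [Ne.symm hxi]
  · intro b _ hbi; exact h0 x b hxi hbi

lemma sum_triple (i : Fin n) (D : Fin n → Fin n → Fin n → ℝ)
    (h0 : ∀ x y l, x ≠ i → y ≠ i → l ≠ i → D x y l = 0)
    (hcyc : ∀ x y l, D x y l = D y l x) :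
    ∑ x, ∑ y ∈ univ.filter (fun y => y ≠ x), ∑ l ∈ univ.filter (fun l => l ≠ x ∧ l ≠ y), D x y l
      = 3 * ∑ y ∈ univ.filter (fun y => y ≠ i),
            ∑ l ∈ univ.filter (fun l => l ≠ i ∧ l ≠ y), D i y l := by
  rw [← Finset.sum_erase_add univ _ (Finset.mem_univ i), ← Finset.filter_ne']
  have key : ∀ x : Fin n, x ≠ i →
      (∑ y ∈ univ.filter (fun y => y ≠ x), ∑ l ∈ univ.filter (fun l => l ≠ x ∧ l ≠ y), D x y l)
        = (∑ y ∈ univ.filter (fun y => y ≠ x ∧ y ≠ i), D x y i)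
          + ∑ l ∈ univ.filter (fun l => l ≠ x ∧ l ≠ i), D x i l := by
    intro x hx
    rw [← Finset.sum_erase_add (univ.filter (fun y => y ≠ x)) _
      (by simp [Ne.symm hx] : i ∈ univ.filter (fun y => y ≠ x))]
    congr 1
    · rw [show (univ.filter (fun y => y ≠ x)).erase i
          = univ.filter (fun y => y ≠ x ∧ y ≠ i) by
        ext y; simp [Finset.mem_erase]; tauto]
      refine Finset.sum_congr rfl fun y hy => ?_
      have hy' := Finset.mem_filter.mp hy
      refine Finset.sum_eq_single_of_mem i ?_ ?_
      · simp [Ne.symm hx, Ne.symm hy'.2.2]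
      · intro b _ hbi; exact h0 x y b hx hy'.2.2 hbi
  rw [Finset.sum_congr rfl (fun x hx => key x (Finset.mem_filter.mp hx).2),
    Finset.sum_add_distrib]
  have e1 : ∑ x ∈ univ.filter (fun x => x ≠ i),
      ∑ y ∈ univ.filter (fun y => y ≠ x ∧ y ≠ i), D x y i
      = ∑ y ∈ univ.filter (fun y => y ≠ i),
          ∑ l ∈ univ.filter (fun l => l ≠ i ∧ l ≠ y), D i y l := by
    refine Finset.sum_congr rfl fun x hx => ?_
    rw [show (univ.filter (fun y => y ≠ x ∧ y ≠ i))
        = univ.filter (fun l => l ≠ i ∧ l ≠ x) from by ext y; simp [and_comm]]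
    refine Finset.sum_congr rfl fun y _ => ?_
    rw [hcyc x y i, hcyc y i x]
  have e2 : ∑ x ∈ univ.filter (fun x => x ≠ i),
      ∑ l ∈ univ.filter (fun l => l ≠ x ∧ l ≠ i), D x i l
      = ∑ y ∈ univ.filter (fun y => y ≠ i),
          ∑ l ∈ univ.filter (fun l => l ≠ i ∧ l ≠ y), D i y l := by
    rw [← sum_swap_pairs i (fun y l => D i y l)]
    refine Finset.sum_congr rfl fun x hx => Finset.sum_congr rfl fun l _ => ?_
    rw [hcyc x i l]
  rw [e1, e2]
  ring

end Aux

lemma potential_diff (n : ℕ) (v : Fin n → ℝ) (w : Fin n → Fin n → ℝ) (h φ m q : ℝ)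
    (i : Fin n) (S S' : NetState n) (hb : ∀ x y, x ≠ i → bv (S' x y) = bv (S x y)) :
    potential n v w h φ m q S' - potential n v w h φ m q S
      = payoff n v w h φ m q S' i - payoff n v w h φ m q S i := by
  -- abbreviations for the "mixed canonical" sums
  have e1 : (∑ x, bv (S' x x) * v x) - (∑ x, bv (S x x) * v x)
      = bv (S' i i) * v i - bv (S i i) * v i := by
    rw [← Finset.sum_sub_distrib]
    refine Finset.sum_eq_single_of_mem i (Finset.mem_univ i) ?_
    intro b _ hbi
    rw [hb b b hbi]; ring
  have e2 : (h / 2) * (∑ x, ∑ y ∈ univ.filter (fun y => y ≠ x), bv (S' x x) * bv (S' y y))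
        - (h / 2) * (∑ x, ∑ y ∈ univ.filter (fun y => y ≠ x), bv (S x x) * bv (S y y))
      = h * bv (S' i i) * (∑ j ∈ univ.filter (fun j => j ≠ i), bv (S j j))
        - h * bv (S i i) * (∑ j ∈ univ.filter (fun j => j ≠ i), bv (S j j)) := by
    rw [← mul_sub,
      ← sum2_sub univ (fun x => univ.filter (fun y => y ≠ x))
        (fun x y => bv (S' x x) * bv (S' y y)) (fun x y => bv (S x x) * bv (S y y)),
      sum_pair i (fun x y => bv (S' x x) * bv (S' y y) - bv (S x x) * bv (S y y))
        (fun x y hx hy => by beta_reduce; rw [hb x x hx, hb y y hy]; ring)]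
    have r1 : ∑ y ∈ univ.filter (fun y => y ≠ i),
        (bv (S' i i) * bv (S' y y) - bv (S i i) * bv (S y y))
        = bv (S' i i) * (∑ j ∈ univ.filter (fun j => j ≠ i), bv (S j j))
          - bv (S i i) * (∑ j ∈ univ.filter (fun j => j ≠ i), bv (S j j)) := by
      rw [Finset.mul_sum, Finset.mul_sum, ← Finset.sum_sub_distrib]
      refine Finset.sum_congr rfl fun j hj => ?_
      rw [hb j j (Finset.mem_filter.mp hj).2]
    have r2 : ∑ x ∈ univ.filter (fun x => x ≠ i),
        (bv (S' x x) * bv (S' i i) - bv (S x x) * bv (S i i))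
        = bv (S' i i) * (∑ j ∈ univ.filter (fun j => j ≠ i), bv (S j j))
          - bv (S i i) * (∑ j ∈ univ.filter (fun j => j ≠ i), bv (S j j)) := by
      rw [Finset.mul_sum, Finset.mul_sum, ← Finset.sum_sub_distrib]
      refine Finset.sum_congr rfl fun j hj => ?_
      rw [hb j j (Finset.mem_filter.mp hj).2]; ring
    rw [r1, r2]; ring
  have e3 : (φ / 2) * (∑ x, ∑ y ∈ univ.filter (fun y => y ≠ x),
          bv (S' x x) * bv (S' y y) * bv (S' x y) * bv (S' y x))
        - (φ / 2) * (∑ x, ∑ y ∈ univ.filter (fun y => y ≠ x),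
          bv (S x x) * bv (S y y) * bv (S x y) * bv (S y x))
      = φ * bv (S' i i) * (∑ j ∈ univ.filter (fun j => j ≠ i),
            bv (S' i j) * bv (S j i) * bv (S j j))
        - φ * bv (S i i) * (∑ j ∈ univ.filter (fun j => j ≠ i),
            bv (S i j) * bv (S j i) * bv (S j j)) := by
    rw [← mul_sub,
      ← sum2_sub univ (fun x => univ.filter (fun y => y ≠ x))
        (fun x y => bv (S' x x) * bv (S' y y) * bv (S' x y) * bv (S' y x))
        (fun x y => bv (S x x) * bv (S y y) * bv (S x y) * bv (S y x)),
      sum_pair i (fun x y => bv (S' x x) * bv (S' y y) * bv (S' x y) * bv (S' y x)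
          - bv (S x x) * bv (S y y) * bv (S x y) * bv (S y x))
        (fun x y hx hy => by
          beta_reduce; rw [hb x x hx, hb y y hy, hb x y hx, hb y x hy]; ring)]
    have r1 : ∑ y ∈ univ.filter (fun y => y ≠ i),
        (bv (S' i i) * bv (S' y y) * bv (S' i y) * bv (S' y i)
          - bv (S i i) * bv (S y y) * bv (S i y) * bv (S y i))
        = bv (S' i i) * (∑ j ∈ univ.filter (fun j => j ≠ i),
              bv (S' i j) * bv (S j i) * bv (S j j))
          - bv (S i i) * (∑ j ∈ univ.filter (fun j => j ≠ i),
              bv (S i j) * bv (S j i) * bv (S j j)) := by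
      rw [Finset.mul_sum, Finset.mul_sum, ← Finset.sum_sub_distrib]
      refine Finset.sum_congr rfl fun j hj => ?_
      have hji := (Finset.mem_filter.mp hj).2
      rw [hb j j hji, hb j i hji]; ring
    have r2 : ∑ x ∈ univ.filter (fun x => x ≠ i),
        (bv (S' x x) * bv (S' i i) * bv (S' x i) * bv (S' i x)
          - bv (S x x) * bv (S i i) * bv (S x i) * bv (S i x))
        = bv (S' i i) * (∑ j ∈ univ.filter (fun j => j ≠ i),
              bv (S' i j) * bv (S j i) * bv (S j j))
          - bv (S i i) * (∑ j ∈ univ.filter (fun j => j ≠ i),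
              bv (S i j) * bv (S j i) * bv (S j j)) := by
      rw [Finset.mul_sum, Finset.mul_sum, ← Finset.sum_sub_distrib]
      refine Finset.sum_congr rfl fun j hj => ?_
      have hji := (Finset.mem_filter.mp hj).2
      rw [hb j j hji, hb j i hji]; ring
    rw [r1, r2]; ring
  have e4 : (∑ x, ∑ y ∈ univ.filter (fun y => y ≠ x), bv (S' x y) * w x y)
        - (∑ x, ∑ y ∈ univ.filter (fun y => y ≠ x), bv (S x y) * w x y)
      = (∑ j ∈ univ.filter (fun j => j ≠ i), bv (S' i j) * w i j)
        - (∑ j ∈ univ.filter (fun j => j ≠ i), bv (S i j) * w i j) := by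
    rw [← sum2_sub univ (fun x => univ.filter (fun y => y ≠ x))
        (fun x y => bv (S' x y) * w x y) (fun x y => bv (S x y) * w x y),
      sum_pair i (fun x y => bv (S' x y) * w x y - bv (S x y) * w x y)
        (fun x y hx _ => by beta_reduce; rw [hb x y hx]; ring)]
    have r2 : ∑ x ∈ univ.filter (fun x => x ≠ i),
        (bv (S' x i) * w x i - bv (S x i) * w x i) = 0 := by
      refine Finset.sum_eq_zero fun x hx => ?_
      rw [hb x i (Finset.mem_filter.mp hx).2]; ring
    rw [r2, Finset.sum_sub_distrib]; ring
  have e5 : (m / 2) * (∑ x, ∑ y ∈ univ.filter (fun y => y ≠ x), bv (S' x y) * bv (S' y x))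
        - (m / 2) * (∑ x, ∑ y ∈ univ.filter (fun y => y ≠ x), bv (S x y) * bv (S y x))
      = m * (∑ j ∈ univ.filter (fun j => j ≠ i), bv (S' i j) * bv (S j i))
        - m * (∑ j ∈ univ.filter (fun j => j ≠ i), bv (S i j) * bv (S j i)) := by
    rw [← mul_sub,
      ← sum2_sub univ (fun x => univ.filter (fun y => y ≠ x))
        (fun x y => bv (S' x y) * bv (S' y x)) (fun x y => bv (S x y) * bv (S y x)),
      sum_pair i (fun x y => bv (S' x y) * bv (S' y x) - bv (S x y) * bv (S y x))
        (fun x y hx hy => by beta_reduce; rw [hb x y hx, hb y x hy]; ring)]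
    have r1 : ∑ y ∈ univ.filter (fun y => y ≠ i),
        (bv (S' i y) * bv (S' y i) - bv (S i y) * bv (S y i))
        = (∑ j ∈ univ.filter (fun j => j ≠ i), bv (S' i j) * bv (S j i))
          - (∑ j ∈ univ.filter (fun j => j ≠ i), bv (S i j) * bv (S j i)) := by
      rw [← Finset.sum_sub_distrib]
      refine Finset.sum_congr rfl fun j hj => ?_
      rw [hb j i (Finset.mem_filter.mp hj).2]
    have r2 : ∑ x ∈ univ.filter (fun x => x ≠ i),
        (bv (S' x i) * bv (S' i x) - bv (S x i) * bv (S i x))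
        = (∑ j ∈ univ.filter (fun j => j ≠ i), bv (S' i j) * bv (S j i))
          - (∑ j ∈ univ.filter (fun j => j ≠ i), bv (S i j) * bv (S j i)) := by
      rw [← Finset.sum_sub_distrib]
      refine Finset.sum_congr rfl fun j hj => ?_
      rw [hb j i (Finset.mem_filter.mp hj).2]; ring
    rw [r1, r2]; ring
  have e6 : (q / 3) * (∑ x, ∑ y ∈ univ.filter (fun y => y ≠ x),
          ∑ l ∈ univ.filter (fun l => l ≠ x ∧ l ≠ y), bv (S' x y) * bv (S' y l) * bv (S' l x))
        - (q / 3) * (∑ x, ∑ y ∈ univ.filter (fun y => y ≠ x),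
          ∑ l ∈ univ.filter (fun l => l ≠ x ∧ l ≠ y), bv (S x y) * bv (S y l) * bv (S l x))
      = q * (∑ j ∈ univ.filter (fun j => j ≠ i),
            ∑ l ∈ univ.filter (fun l => l ≠ i ∧ l ≠ j), bv (S' i j) * bv (S j l) * bv (S l i))
        - q * (∑ j ∈ univ.filter (fun j => j ≠ i),
            ∑ l ∈ univ.filter (fun l => l ≠ i ∧ l ≠ j),
              bv (S i j) * bv (S j l) * bv (S l i)) := by
    rw [← mul_sub,
      ← sum3_sub univ (fun x => univ.filter (fun y => y ≠ x))
        (fun x y => univ.filter (fun l => l ≠ x ∧ l ≠ y))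
        (fun x y l => bv (S' x y) * bv (S' y l) * bv (S' l x))
        (fun x y l => bv (S x y) * bv (S y l) * bv (S l x)),
      sum_triple i (fun x y l => bv (S' x y) * bv (S' y l) * bv (S' l x)
          - bv (S x y) * bv (S y l) * bv (S l x))
        (fun x y l hx hy hl => by beta_reduce; rw [hb x y hx, hb y l hy, hb l x hl]; ring)
        (fun x y l => by beta_reduce; ring)]
    have r1 : ∑ y ∈ univ.filter (fun y => y ≠ i),
        ∑ l ∈ univ.filter (fun l => l ≠ i ∧ l ≠ y),
          (bv (S' i y) * bv (S' y l) * bv (S' l i) - bv (S i y) * bv (S y l) * bv (S l i))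
        = (∑ j ∈ univ.filter (fun j => j ≠ i),
              ∑ l ∈ univ.filter (fun l => l ≠ i ∧ l ≠ j),
                bv (S' i j) * bv (S j l) * bv (S l i))
          - (∑ j ∈ univ.filter (fun j => j ≠ i),
              ∑ l ∈ univ.filter (fun l => l ≠ i ∧ l ≠ j),
                bv (S i j) * bv (S j l) * bv (S l i)) := by
      rw [← sum2_sub (univ.filter (fun j => j ≠ i))
        (fun j => univ.filter (fun l => l ≠ i ∧ l ≠ j))
        (fun j l => bv (S' i j) * bv (S j l) * bv (S l i))
        (fun j l => bv (S i j) * bv (S j l) * bv (S l i))]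
      refine Finset.sum_congr rfl fun j hj => Finset.sum_congr rfl fun l hl => ?_
      have hji := (Finset.mem_filter.mp hj).2
      have hli := (Finset.mem_filter.mp hl).2.1
      rw [hb j l hji, hb l i hli]
    rw [r1]; ring
  -- rewrite the primed payoff sums to the mixed canonical form
  have hq2 : ∑ j ∈ univ.filter (fun j => j ≠ i), bv (S' j j)
      = ∑ j ∈ univ.filter (fun j => j ≠ i), bv (S j j) :=
    Finset.sum_congr rfl fun j hj => hb j j (Finset.mem_filter.mp hj).2
  have hq3 : ∑ j ∈ univ.filter (fun j => j ≠ i), bv (S' i j) * bv (S' j i) * bv (S' j j)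
      = ∑ j ∈ univ.filter (fun j => j ≠ i), bv (S' i j) * bv (S j i) * bv (S j j) := by
    refine Finset.sum_congr rfl fun j hj => ?_
    have hji := (Finset.mem_filter.mp hj).2
    rw [hb j i hji, hb j j hji]
  have hq5 : ∑ j ∈ univ.filter (fun j => j ≠ i), bv (S' i j) * bv (S' j i)
      = ∑ j ∈ univ.filter (fun j => j ≠ i), bv (S' i j) * bv (S j i) := by
    refine Finset.sum_congr rfl fun j hj => ?_
    rw [hb j i (Finset.mem_filter.mp hj).2]
  have hq6 : ∑ j ∈ univ.filter (fun j => j ≠ i),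
        ∑ l ∈ univ.filter (fun l => l ≠ i ∧ l ≠ j), bv (S' i j) * bv (S' j l) * bv (S' l i)
      = ∑ j ∈ univ.filter (fun j => j ≠ i),
        ∑ l ∈ univ.filter (fun l => l ≠ i ∧ l ≠ j), bv (S' i j) * bv (S j l) * bv (S l i) := by
    refine Finset.sum_congr rfl fun j hj => Finset.sum_congr rfl fun l hl => ?_
    have hji := (Finset.mem_filter.mp hj).2
    have hli := (Finset.mem_filter.mp hl).2.1
    rw [hb j l hji, hb l i hli]
  simp only [potential, payoff]
  linear_combination e1 + e2 + e3 + e4 + e5 + e6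
    - (h * bv (S' i i)) * hq2 - (φ * bv (S' i i)) * hq3 - m * hq5 - q * hq6

/-- **Global modes are Nash equilibria.** Any state maximizing the stationary probability
`π(S) ∝ exp(Φ(S)/β)` over the state space (equivalently, maximizing the potential `Φ`) is
`n`-player Nash stable, i.e. a Nash equilibrium of the one-shot `n`-player game in which each
player `i` simultaneously chooses `(a_i, {g_{ij}}_{j≠i})`. -/
theorem global_mode_is_Nash (n : ℕ) (hn : 2 ≤ n)
    (v : Fin n → ℝ) (w : Fin n → Fin n → ℝ) (h φ m q : ℝ) (β : ℝ) (hβ : 0 < β)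
    (Smax : NetState n)
    (hmax : ∀ S : NetState n, statDist n v w h φ m q β S ≤ statDist n v w h φ m q β Smax) :
    kPS n v w h φ m q n Smax := by
  have hpot : ∀ S : NetState n,
      potential n v w h φ m q S ≤ potential n v w h φ m q Smax := by
    intro S
    have hZ : 0 < ∑ T : NetState n, Real.exp (potential n v w h φ m q T / β) :=
      Finset.sum_pos (fun T _ => Real.exp_pos _) Finset.univ_nonempty
    have h1 := hmax S
    unfold statDist at h1
    rw [div_le_div_iff_of_pos_right hZ, Real.exp_le_exp] at h1
    exact (div_le_div_iff_of_pos_right hβ).mp h1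
  intro Ik hcard i hi S' hdev
  have hIk : Ik = Finset.univ := Finset.eq_univ_of_card Ik (by simpa using hcard)
  have hd := potential_diff n v w h φ m q i Smax S' (by
    intro x y hx
    rw [hdev x y (fun hc => hx hc.1)])
  linarith [hpot S']
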